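/- Let H be a hypergraph on a finite set V with fractional transversal number τ* < 2 and shatter function satisfying π_H(n) ≤ (n+1)³ for all n. If integers a = b = 19 satisfy 2^b · (a+b+1)³ < C(a+b, b), then H has a transversal of size at most 19. In particular, since 2^{19}·39³ < C(38,19), such H has transversal number at most 19. -/

import Mathlib

open Finset

section Aux

variable {V : Type*} [Fintype V] [DecidableEq V]

abbrev JJ := (Fin 19 ⊕ Fin 19)

/-- total weight of all tuples -/
lemma total_weight (x : V → ℝ) {n : ℕ} (ι : Type*) [Fintype ι] [DecidableEq ι] (hι : Fintype.card ι = n) :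
    ∑ z : ι → V, ∏ j, x (z j) = (∑ v, x v) ^ n := by
  classical
  rw [← Fintype.piFinset_univ, ← Finset.prod_univ_sum (fun _ : ι => (univ : Finset V)) (fun _ v => x v)]
  rw [Finset.prod_const, card_univ, hι]

/-- weight of tuples inside a given set F -/
lemma inner_weight (x : V → ℝ) (F : Finset V) :
    ∑ u : Fin 19 → V, (if (∀ i, u i ∈ F) then ∏ i, x (u i) else 0)
      = (∑ v ∈ F, x v) ^ 19 := by
  classical
  have h1 : ∀ u : Fin 19 → V, (∀ i, u i ∈ F) ↔ u ∈ Fintype.piFinset (fun _ => F) := by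
    intro u; simp [Fintype.mem_piFinset]
  calc ∑ u : Fin 19 → V, (if (∀ i, u i ∈ F) then ∏ i, x (u i) else 0)
      = ∑ u : Fin 19 → V, (if u ∈ Fintype.piFinset (fun _ : Fin 19 => F) then ∏ i, x (u i) else 0) := by
        refine Finset.sum_congr rfl fun u _ => ?_
        rw [if_congr (h1 u) rfl rfl]
    _ = ∑ u ∈ Fintype.piFinset (fun _ : Fin 19 => F), ∏ i, x (u i) := by
        rw [Finset.sum_ite_mem, univ_inter]
    _ = (∑ v ∈ F, x v) ^ 19 := by
        rw [← Finset.prod_univ_sum (fun _ : Fin 19 => F) (fun _ v => x v),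
          Finset.prod_const, card_univ, Fintype.card_fin]

end Aux

theorem stmt17 {V : Type*} [Fintype V] [DecidableEq V]
    (H : Finset (Finset V))
    (hfrac : ∃ x : V → ℝ, (∀ v, 0 ≤ x v) ∧ (∀ F ∈ H, 1 ≤ ∑ v ∈ F, x v) ∧
      ∑ v, x v < 2)
    (hshatter : ∀ S : Finset V, (H.image fun F => S ∩ F).card ≤ (S.card + 1) ^ 3)
    (hnum : 2 ^ 19 * 39 ^ 3 < Nat.choose 38 19) :
    ∃ Tr : Finset V, Tr.card ≤ 19 ∧ ∀ F ∈ H, (Tr ∩ F).Nonempty := by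
  classical
  rcases H.eq_empty_or_nonempty with hHe | ⟨F₀, hF₀⟩
  · exact ⟨∅, by simp, by simp [hHe]⟩
  obtain ⟨x, hx0, hxF, hxs⟩ := hfrac
  by_contra hcon
  push_neg at hcon
  have hbad : ∀ w : Fin 19 → V, ∃ F ∈ H, ∀ i, w i ∉ F := by
    intro w
    obtain ⟨F, hFH, hF⟩ := hcon (Finset.image w Finset.univ)
      (le_trans Finset.card_image_le (by simp))
    exact ⟨F, hFH, fun i hi => (Finset.not_nonempty_iff_eq_empty.2 hF) ⟨w i, Finset.mem_inter.2
      ⟨Finset.mem_image_of_mem w (Finset.mem_univ i), hi⟩⟩⟩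
  choose Fw hFwH hFw using hbad
  set σ : ℝ := ∑ v, x v with hσ
  have hσ1 : (1 : ℝ) ≤ σ := le_trans (hxF F₀ hF₀)
    (Finset.sum_le_sum_of_subset_of_nonneg (Finset.subset_univ F₀) (fun v _ _ => hx0 v))
  -- weight
  set W : (JJ → V) → ℝ := fun z => ∏ j, x (z j) with hW
  have hW0 : ∀ z, 0 ≤ W z := fun z => Finset.prod_nonneg fun j _ => hx0 _
  set Good : (JJ → V) → Finset JJ → Prop :=
    fun z I => ∃ F ∈ H, (∀ j ∉ I, z j ∉ F) ∧ (∀ j ∈ I, z j ∈ F) with hGood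
  set S : Finset JJ → ℝ := fun I => ∑ z, if Good z I then W z else 0 with hSdef
  set P : Finset (Finset JJ) := Finset.powersetCard 19 Finset.univ with hP
  set I₀ : Finset JJ := Finset.univ.image Sum.inr with hI₀
  have hcardJ : Fintype.card JJ = 38 := by simp
  have hI₀card : I₀.card = 19 := by
    rw [hI₀, Finset.card_image_of_injective _ Sum.inr_injective]; simp
  have hI₀P : I₀ ∈ P := by
    rw [hP, Finset.mem_powersetCard]
    exact ⟨Finset.subset_univ _, hI₀card⟩
  -- Step A: trace count bound for each tuple z
  have hcount : ∀ z : JJ → V, ((P.filter (fun I => Good z I)).card : ℝ) ≤ 39 ^ 3 := by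
    intro z
    set Sz : Finset V := Finset.image z Finset.univ with hSz
    have h1 : P.filter (fun I => Good z I) ⊆
        (H.image fun F => Sz ∩ F).image (fun t => Finset.univ.filter (fun j => z j ∈ t)) := by
      intro I hI
      obtain ⟨F, hFH, hmiss, hhit⟩ := (Finset.mem_filter.1 hI).2
      refine Finset.mem_image.2 ⟨Sz ∩ F, Finset.mem_image_of_mem _ hFH, ?_⟩
      ext j
      simp only [Finset.mem_filter, Finset.mem_univ, true_and, Finset.mem_inter]
      constructor
      · rintro ⟨-, hjF⟩
        by_contra hjI
        exact hmiss j hjI hjF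
      · intro hjI
        exact ⟨Finset.mem_image_of_mem z (Finset.mem_univ j), hhit j hjI⟩
    have h2 : (P.filter (fun I => Good z I)).card ≤ 39 ^ 3 := by
      calc (P.filter (fun I => Good z I)).card
          ≤ ((H.image fun F => Sz ∩ F).image
              (fun t => Finset.univ.filter (fun j => z j ∈ t))).card := Finset.card_le_card h1
        _ ≤ (H.image fun F => Sz ∩ F).card := Finset.card_image_le
        _ ≤ (Sz.card + 1) ^ 3 := hshatter Sz
        _ ≤ 39 ^ 3 := by
            refine Nat.pow_le_pow_left ?_ 3
            have : Sz.card ≤ 38 := by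
              calc Sz.card ≤ (Finset.univ : Finset JJ).card := Finset.card_image_le
                _ = 38 := by rw [card_univ, hcardJ]
            omega
    exact_mod_cast h2
  -- total weight
  have hTotal : ∑ z : JJ → V, W z = σ ^ 38 := total_weight x JJ hcardJ
  -- Step B: upper bound on the double sum
  have hupper : ∑ I ∈ P, S I ≤ 39 ^ 3 * σ ^ 38 := by
    have h1 : ∑ I ∈ P, S I = ∑ z : JJ → V, ∑ I ∈ P, if Good z I then W z else 0 := by
      rw [hSdef]; exact Finset.sum_comm
    rw [h1, ← hTotal, Finset.mul_sum]
    refine Finset.sum_le_sum fun z _ => ?_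
    calc ∑ I ∈ P, (if Good z I then W z else 0)
        = ∑ I ∈ P.filter (fun I => Good z I), W z := (Finset.sum_filter _ _).symm
      _ = ((P.filter (fun I => Good z I)).card : ℝ) * W z := by
          rw [Finset.sum_const, nsmul_eq_mul]
      _ ≤ 39 ^ 3 * W z := mul_le_mul_of_nonneg_right (hcount z) (hW0 z)
  -- Step C: symmetry, S I = S I₀ for every I in P
  have hsymm : ∀ I ∈ P, S I = S I₀ := by
    intro I hI
    have hIcard : I.card = 19 := (Finset.mem_powersetCard.1 hI).2
    have hce : I₀.card = I.card := by rw [hIcard, hI₀card]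
    set e : {j // j ∈ I₀} ≃ {j // j ∈ I} := Finset.equivOfCardEq hce with he
    set π : Equiv.Perm JJ := e.extendSubtype with hπdef
    have hπ : ∀ j, π j ∈ I ↔ j ∈ I₀ := by
      intro j
      constructor
      · intro h
        by_contra hn
        exact e.extendSubtype_not_mem j hn h
      · intro h
        exact e.extendSubtype_mem j h
    have hiff : ∀ (z : JJ → V), Good (fun j => z (π j)) I₀ ↔ Good z I := by
      intro z
      constructor
      · rintro ⟨F, hFH, h1, h2⟩
        refine ⟨F, hFH, ?_, ?_⟩
        · intro j hj
          have h0 : π.symm j ∉ I₀ := by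
            intro hh
            exact hj (by simpa using (hπ (π.symm j)).2 hh)
          simpa using h1 (π.symm j) h0
        · intro j hj
          have h0 : π.symm j ∈ I₀ := by
            rw [← hπ (π.symm j)]
            simpa using hj
          simpa using h2 (π.symm j) h0
      · rintro ⟨F, hFH, h1, h2⟩
        refine ⟨F, hFH, ?_, ?_⟩
        · intro j hj
          exact h1 (π j) (fun hh => hj ((hπ j).1 hh))
        · intro j hj
          exact h2 (π j) ((hπ j).2 hj)
    have hWπ : ∀ z : JJ → V, W (fun j => z (π j)) = W z := by
      intro z
      exact Equiv.prod_comp π (fun j => x (z j))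
    set eqv : (JJ → V) ≃ (JJ → V) :=
      { toFun := fun z => fun j => z (π j)
        invFun := fun z => fun j => z (π.symm j)
        left_inv := fun z => funext fun j => by simp
        right_inv := fun z => funext fun j => by simp } with heqv
    rw [hSdef]
    refine Fintype.sum_equiv eqv _ _ fun z => ?_
    have h3 : eqv z = fun j => z (π j) := rfl
    rw [h3]
    by_cases hg : Good z I
    · rw [if_pos hg, if_pos ((hiff z).2 hg), hWπ]
    · rw [if_neg hg, if_neg (fun hh => hg ((hiff z).1 hh))]
  -- Step D: lower bound S I₀ ≥ σ ^ 19
  have hj0 : ∀ j : JJ, j ∈ I₀ ↔ ∃ i, Sum.inr i = j := by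
    intro j; simp [hI₀]
  have hlow : σ ^ 19 ≤ S I₀ := by
    set e : (Fin 19 → V) × (Fin 19 → V) ≃ (JJ → V) :=
      (Equiv.sumArrowEquivProdArrow (Fin 19) (Fin 19) V).symm with he
    have h1 : S I₀ = ∑ p : (Fin 19 → V) × (Fin 19 → V),
        if Good (Sum.elim p.1 p.2) I₀ then W (Sum.elim p.1 p.2) else 0 := by
      rw [hSdef]
      refine (Fintype.sum_equiv e _ _ fun p => ?_).symm
      have : e p = Sum.elim p.1 p.2 := rfl
      rw [this]
    rw [h1, Fintype.sum_prod_type]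
    have h2 : ∀ w u : Fin 19 → V,
        (if (∀ i, u i ∈ Fw w) then (∏ i, x (w i)) * (∏ i, x (u i)) else 0)
          ≤ (if Good (Sum.elim w u) I₀ then W (Sum.elim w u) else 0) := by
      intro w u
      by_cases hc : ∀ i, u i ∈ Fw w
      · rw [if_pos hc]
        have hg : Good (Sum.elim w u) I₀ := by
          refine ⟨Fw w, hFwH w, ?_, ?_⟩
          · intro j hj
            rcases j with i | i
            · exact hFw w i
            · exact absurd ((hj0 (Sum.inr i)).2 ⟨i, rfl⟩) hj
          · intro j hj
            rcases j with i | i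
            · exact absurd ((hj0 (Sum.inl i)).1 hj) (by simp)
            · exact hc i
        rw [if_pos hg]
        exact le_of_eq (Fintype.prod_sum_type (fun j : JJ => x (Sum.elim w u j))).symm
      · rw [if_neg hc]
        split
        · exact hW0 _
        · exact le_refl 0
    calc σ ^ 19 = ∑ w : Fin 19 → V, ∏ i, x (w i) := (total_weight x (Fin 19) (by simp)).symm
      _ ≤ ∑ w : Fin 19 → V, ∑ u : Fin 19 → V,
          (if (∀ i, u i ∈ Fw w) then (∏ i, x (w i)) * (∏ i, x (u i)) else 0) := by
          refine Finset.sum_le_sum fun w _ => ?_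
          have h3 : ∑ u : Fin 19 → V,
              (if (∀ i, u i ∈ Fw w) then (∏ i, x (w i)) * (∏ i, x (u i)) else 0)
              = (∏ i, x (w i)) * ∑ u : Fin 19 → V,
                  (if (∀ i, u i ∈ Fw w) then (∏ i, x (u i)) else 0) := by
            rw [Finset.mul_sum]
            refine Finset.sum_congr rfl fun u _ => ?_
            split <;> ring
          rw [h3, inner_weight x (Fw w)]
          have h4 : (1:ℝ) ≤ (∑ v ∈ Fw w, x v) ^ 19 :=
            one_le_pow₀ (hxF (Fw w) (hFwH w))
          nlinarith [Finset.prod_nonneg (fun i (_ : i ∈ (univ : Finset (Fin 19))) => hx0 (w i))]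
      _ ≤ ∑ w : Fin 19 → V, ∑ u : Fin 19 → V,
          (if Good (Sum.elim w u) I₀ then W (Sum.elim w u) else 0) := by
          exact Finset.sum_le_sum fun w _ => Finset.sum_le_sum fun u _ => h2 w u
  -- Step E: combine
  have hcardP : (P.card : ℝ) = (Nat.choose 38 19 : ℝ) := by
    rw [hP, Finset.card_powersetCard, card_univ, hcardJ]
  have hsum : ∑ I ∈ P, S I = (P.card : ℝ) * S I₀ := by
    rw [Finset.sum_congr rfl hsymm, Finset.sum_const, nsmul_eq_mul]
  have hσ0 : (0:ℝ) < σ := lt_of_lt_of_le one_pos hσ1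
  have hkey : (Nat.choose 38 19 : ℝ) * σ ^ 19 ≤ 39 ^ 3 * σ ^ 38 := by
    calc (Nat.choose 38 19 : ℝ) * σ ^ 19 = (P.card : ℝ) * σ ^ 19 := by rw [hcardP]
      _ ≤ (P.card : ℝ) * S I₀ := by
          refine mul_le_mul_of_nonneg_left hlow (Nat.cast_nonneg _)
      _ = ∑ I ∈ P, S I := hsum.symm
      _ ≤ 39 ^ 3 * σ ^ 38 := hupper
  have hkey2 : (Nat.choose 38 19 : ℝ) ≤ 39 ^ 3 * σ ^ 19 := by
    have h38 : σ ^ 38 = σ ^ 19 * σ ^ 19 := by ring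
    rw [h38, ← mul_assoc] at hkey
    exact le_of_mul_le_mul_right hkey (pow_pos hσ0 19)
  have hfin : (Nat.choose 38 19 : ℝ) < (2 ^ 19 * 39 ^ 3 : ℕ) := by
    have h5 : σ ^ 19 < 2 ^ 19 := by
      exact pow_lt_pow_left₀ hxs (le_of_lt hσ0) (by norm_num)
    have : (39:ℝ) ^ 3 * σ ^ 19 < 39 ^ 3 * 2 ^ 19 := by nlinarith
    push_cast
    nlinarith
  rw [Nat.cast_lt] at hfin
  omega
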